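/- Let T be a nearly Gorenstein numerical semigroup that is not symmetric, minimally generated by n_1, ..., n_ν. Then for every index i, gcd of the set {n_1, ..., n_ν} \ {n_i} equals 1. -/
import Mathlib

/-- A numerical semigroup: a subset of ℕ containing 0, closed under addition,
with finite complement. -/
def IsNumSgp (S : Set ℕ) : Prop :=
  0 ∈ S ∧ (∀ a ∈ S, ∀ b ∈ S, a + b ∈ S) ∧ (Sᶜ : Set ℕ).Finite

/-- An integer belongs to (the image in ℤ of) S. -/
def memZ (S : Set ℕ) (z : ℤ) : Prop := ∃ s ∈ S, (s : ℤ) = z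

/-- F is the Frobenius number of S: the largest natural number not in S. -/
def IsFrob (S : Set ℕ) (F : ℕ) : Prop := F ∉ S ∧ ∀ n, F < n → n ∈ S

/-- The set of pseudo-Frobenius numbers of S. -/
def PF (S : Set ℕ) : Set ℕ := {f | f ∉ S ∧ ∀ s ∈ S, s ≠ 0 → f + s ∈ S}

/-- n is a minimal generator of S. -/
def IsMinGen (S : Set ℕ) (n : ℕ) : Prop :=
  n ∈ S ∧ n ≠ 0 ∧ ¬∃ a ∈ S, ∃ b ∈ S, a ≠ 0 ∧ b ≠ 0 ∧ a + b = n

/-- S is almost symmetric (Nari): F - f ∈ PF(S) for every f ∈ PF(S). -/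
def AlmostSym (S : Set ℕ) (F : ℕ) : Prop :=
  ∀ f ∈ PF S, ∃ g ∈ PF S, (g : ℤ) = (F : ℤ) - (f : ℤ)

/-- S is symmetric: PF(S) = {F(S)} (vacuously true when S = ℕ). -/
def IsSym (S : Set ℕ) : Prop := ∀ F, IsFrob S F → PF S = {F}

/-- (f_1,...,f_ν) is an NG-vector for S with minimal generators n_1,...,n_ν. -/
def IsNGVector {ν : ℕ} (S : Set ℕ) (n f : Fin ν → ℕ) : Prop :=
  ∀ i, f i ∈ PF S ∧ ∀ g ∈ PF S, memZ S ((n i : ℤ) + (f i : ℤ) - (g : ℤ))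

/-- S is nearly Gorenstein (generator criterion): for each minimal generator m
there is f ∈ PF(S) with m + f - g ∈ S for all g ∈ PF(S). -/
def NearlyGGen (S : Set ℕ) : Prop :=
  ∀ m, IsMinGen S m → ∃ f ∈ PF S, ∀ g ∈ PF S, memZ S ((m : ℤ) + (f : ℤ) - (g : ℤ))

/-- The canonical ideal K(S) = {z ∈ ℤ : F - z ∉ S}. -/
def Kan (S : Set ℕ) (F : ℕ) : Set ℤ := {z | ¬ memZ S ((F : ℤ) - z)}

/-- The relative ideal (S - K(S)) = {z ∈ ℤ : z + K(S) ⊆ S}. -/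
def SmK (S : Set ℕ) (F : ℕ) : Set ℤ := {z | ∀ k ∈ Kan S F, memZ S (z + k)}

/-- S is nearly Gorenstein: M(S) ⊆ K(S) + (S - K(S)). -/
def NearlyG (S : Set ℕ) (F : ℕ) : Prop :=
  ∀ m ∈ S, m ≠ 0 → ∃ k ∈ Kan S F, ∃ x ∈ SmK S F, k + x = (m : ℤ)

theorem stmt14 (ν : ℕ) (T : Set ℕ) (n : Fin ν → ℕ)
    (hT : IsNumSgp T) (hmono : StrictMono n)
    (hgen : T = {m : ℕ | ∃ c : Fin ν → ℕ, m = ∑ j, c j * n j})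
    (hmin : ∀ i, IsMinGen T (n i))
    (hNG : NearlyGGen T) (hns : ¬ IsSym T) :
    ∀ i : Fin ν, Finset.gcd (Finset.univ.erase i) n = 1 := by
  intro i
  obtain ⟨h0T, haddT, hfinT⟩ := hT
  rw [IsSym] at hns
  push_neg at hns
  obtain ⟨F, ⟨hFnT, hFbig⟩, hPFne⟩ := hns
  have hFPF : F ∈ PF T := ⟨hFnT, fun s _ hs0 => hFbig _ (by omega)⟩
  have hF1 : F + 1 ∈ T := hFbig _ (by omega)
  have hF2 : F + 2 ∈ T := hFbig _ (by omega)
  by_cases hDe : Finset.univ.erase i = (∅ : Finset (Fin ν))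
  · exfalso
    have huniv : (Finset.univ : Finset (Fin ν)) = {i} := by
      ext j
      simp only [Finset.mem_univ, true_iff, Finset.mem_singleton]
      by_contra hj
      have hjj : j ∈ Finset.univ.erase i := Finset.mem_erase.mpr ⟨hj, Finset.mem_univ j⟩
      rw [hDe] at hjj
      exact absurd hjj (Finset.notMem_empty j)
    have hdiv : ∀ m ∈ T, n i ∣ m := by
      intro m hm
      rw [hgen] at hm
      obtain ⟨c, rfl⟩ := hm
      rw [huniv, Finset.sum_singleton]
      exact dvd_mul_left _ _
    have hni1 : n i = 1 := by
      have h1 := hdiv _ hF1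
      have h2 := hdiv _ hF2
      have h3 : n i ∣ 1 := by
        have h4 := Nat.dvd_sub h2 h1
        simpa using h4
      exact Nat.dvd_one.mp h3
    apply hFnT
    rw [hgen]
    exact ⟨fun _ => F, by rw [huniv, Finset.sum_singleton, hni1, mul_one]⟩
  · set d := Finset.gcd (Finset.univ.erase i) n with hd
    have hdvd : ∀ j ∈ Finset.univ.erase i, d ∣ n j := fun j hj => Finset.gcd_dvd hj
    obtain ⟨j₀, hj₀⟩ := Finset.nonempty_of_ne_empty hDe
    have hd0 : d ≠ 0 := by
      intro h
      have h5 := hdvd j₀ hj₀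
      rw [h] at h5
      exact (hmin j₀).2.1 (Nat.eq_zero_of_zero_dvd h5)
    by_contra hd1
    have hd2 : 2 ≤ d := by omega
    have hcop : Nat.Coprime d (n i) := by
      have hdvT : ∀ m ∈ T, Nat.gcd d (n i) ∣ m := by
        intro m hm
        rw [hgen] at hm
        obtain ⟨c, rfl⟩ := hm
        refine Finset.dvd_sum fun j _ => ?_
        by_cases hji : j = i
        · subst hji; exact Dvd.dvd.mul_left (Nat.gcd_dvd_right _ _) _
        · exact Dvd.dvd.mul_left
            ((Nat.gcd_dvd_left _ _).trans (hdvd j (Finset.mem_erase.mpr ⟨hji, Finset.mem_univ j⟩))) _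
      have h1 := hdvT _ hF1
      have h2 := hdvT _ hF2
      have h3 : Nat.gcd d (n i) ∣ 1 := by
        have h4 := Nat.dvd_sub h2 h1
        simpa using h4
      exact Nat.dvd_one.mp h3
    have hcopZ : IsCoprime (d : ℤ) (n i : ℤ) := by
      rw [Int.isCoprime_iff_gcd_eq_one]
      exact_mod_cast hcop
    -- structural lemma, forward direction
    have kfwd : ∀ x : ℕ, x ∈ T → ∀ c : ℕ, c < d → ∀ u : ℤ,
        (x : ℤ) = c * n i + d * u → ∃ v : ℕ, (v : ℤ) = u ∧ d * v ∈ T := by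
      intro x hx c hc u hxu
      rw [hgen] at hx
      obtain ⟨co, hco⟩ := hx
      have hsplit : x = (∑ j ∈ Finset.univ.erase i, co j * n j) + co i * n i := by
        rw [hco, Finset.sum_erase_add _ _ (Finset.mem_univ i)]
      set A := ∑ j ∈ Finset.univ.erase i, co j * n j with hA
      have hdA : d ∣ A := Finset.dvd_sum fun j hj => Dvd.dvd.mul_left (hdvd j hj) _
      obtain ⟨B, hB⟩ := hdA
      have hxZ : (x : ℤ) = A + co i * n i := by exact_mod_cast hsplit
      have hAZ : (A : ℤ) = d * B := by exact_mod_cast hB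
      have hdvdZ : (d : ℤ) ∣ ((co i : ℤ) - c) * n i := by
        refine ⟨u - B, ?_⟩
        have : ((co i : ℤ) - c) * n i = (co i : ℤ) * n i - c * n i := by ring
        rw [this]
        have hrhs : (d : ℤ) * (u - B) = d * u - d * B := by ring
        rw [hrhs]
        linarith [hxu, hxZ, hAZ]
      have hdvdk : (d : ℤ) ∣ (co i : ℤ) - c := hcopZ.dvd_of_dvd_mul_right hdvdZ
      obtain ⟨k, hk⟩ := hdvdk
      have hk0 : 0 ≤ k := by
        by_contra hneg
        push_neg at hneg
        have h1 : k ≤ -1 := by omega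
        have h2 : (d : ℤ) * k ≤ (d : ℤ) * (-1) :=
          mul_le_mul_of_nonneg_left h1 (by positivity)
        have h3 : (0 : ℤ) ≤ (co i : ℤ) := Int.natCast_nonneg _
        have h4 : (c : ℤ) < d := by exact_mod_cast hc
        linarith [hk]
      lift k to ℕ using hk0 with k'
      have hm : (co i : ℤ) * n i - c * n i = d * k' * n i := by
        have : ((co i : ℤ) - c) * n i = (d * k') * n i := by rw [hk]
        linarith [this, sub_mul ((co i : ℤ)) (c : ℤ) ((n i : ℤ))]
      have hdu : (d : ℤ) * u = d * ((B : ℤ) + k' * n i) := by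
        have hexp : (d : ℤ) * ((B : ℤ) + k' * n i) = d * B + d * k' * n i := by ring
        rw [hexp]
        linarith [hxu, hxZ, hAZ, hm]
      have hueq : u = (B : ℤ) + k' * n i :=
        mul_left_cancel₀ (by exact_mod_cast hd0 : (d : ℤ) ≠ 0) hdu
      refine ⟨B + k' * n i, by push_cast; linarith [hueq], ?_⟩
      rw [hgen]
      refine ⟨fun j => if j = i then d * k' else co j, ?_⟩
      rw [← Finset.sum_erase_add _ _ (Finset.mem_univ i)]
      have hsame : ∑ j ∈ Finset.univ.erase i, (if j = i then d * k' else co j) * n j = A := by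
        apply Finset.sum_congr rfl
        intro j hj
        rw [if_neg (Finset.mem_erase.mp hj).1]
      rw [hsame, hB]
      show d * (B + k' * n i) = d * B + (if i = i then d * k' else co i) * n i
      rw [if_pos rfl]
      ring
    -- structural lemma, backward direction
    have kbwd : ∀ x : ℕ, ∀ c : ℕ, ∀ v : ℕ, (x : ℤ) = c * n i + d * v → d * v ∈ T → x ∈ T := by
      intro x c v hx hv
      have hxn : x = c * n i + d * v := by exact_mod_cast hx
      have hcni : c * n i ∈ T := by
        rw [hgen]
        refine ⟨fun j => if j = i then c else 0, ?_⟩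
        rw [Finset.sum_eq_single i (fun j _ hji => by simp [hji]) (fun h => absurd (Finset.mem_univ i) h)]
        simp
      rw [hxn]
      exact haddT _ hcni _ hv
    -- residue decomposition
    have getc : ∀ g : ℕ, ∃ c : ℕ, c < d ∧ ∃ u : ℤ, (g : ℤ) = c * n i + d * u := by
      intro g
      haveI : NeZero d := ⟨hd0⟩
      set w : (ZMod d)ˣ := ZMod.unitOfCoprime (n i) hcop.symm with hw
      refine ⟨((g : ZMod d) * ((w⁻¹ : (ZMod d)ˣ) : ZMod d)).val, ZMod.val_lt _, ?_⟩
      have hdvd' : (d : ℤ) ∣ (g : ℤ) -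
          (((g : ZMod d) * ((w⁻¹ : (ZMod d)ˣ) : ZMod d)).val : ℤ) * n i := by
        rw [← ZMod.intCast_zmod_eq_zero_iff_dvd]
        push_cast
        rw [ZMod.natCast_val, ZMod.cast_id]
        have hwv : ((w : (ZMod d)ˣ) : ZMod d) = (n i : ZMod d) := ZMod.coe_unitOfCoprime _ _
        rw [← hwv, mul_assoc, Units.inv_mul]
        simp
      obtain ⟨u, hu⟩ := hdvd'
      exact ⟨u, by linarith [hu]⟩
    -- every pseudo-Frobenius number is ≡ (d-1)·n i  mod d
    have lemP : ∀ g ∈ PF T, ∃ u : ℤ, (g : ℤ) = ((d - 1 : ℕ) : ℤ) * n i + d * u := by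
      intro g hg
      obtain ⟨c, hc, u, hgu⟩ := getc g
      by_cases hcd : c = d - 1
      · exact ⟨u, by rw [← hcd]; exact hgu⟩
      · exfalso
        have hc1 : c + 1 < d := by omega
        have hgni : g + n i ∈ T := hg.2 (n i) (hmin i).1 (hmin i).2.1
        have hcast : ((g + n i : ℕ) : ℤ) = ((c + 1 : ℕ) : ℤ) * n i + d * u := by
          push_cast
          linarith [hgu]
        obtain ⟨v, hv, hdvT⟩ := kfwd (g + n i) hgni (c + 1) hc1 u hcast
        have hgT : g ∈ T := kbwd g c v (by rw [hgu, ← hv]) hdvT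
        exact hg.1 hgT
    -- get a second pseudo-Frobenius number
    have hexf : ∃ f ∈ PF T, f ≠ F := by
      by_contra h
      push_neg at h
      apply hPFne
      ext x
      simp only [Set.mem_singleton_iff]
      exact ⟨fun hx => h x hx, fun hx => hx ▸ hFPF⟩
    obtain ⟨f, hfPF, hfF⟩ := hexf
    -- nearly Gorenstein at n i
    obtain ⟨fi, hfiPF, hfiprop⟩ := hNG (n i) (hmin i)
    have hexg : ∃ g ∈ PF T, g ≠ fi := by
      by_cases hfi : fi = F
      · exact ⟨f, hfPF, by rw [hfi]; exact hfF⟩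
      · exact ⟨F, hFPF, fun h => hfi h.symm⟩
    obtain ⟨g, hgPF, hgfi⟩ := hexg
    obtain ⟨ug, hug⟩ := lemP g hgPF
    obtain ⟨ui, hui⟩ := lemP fi hfiPF
    obtain ⟨s, hsT, hs⟩ := hfiprop g hgPF
    have hscast : (s : ℤ) = ((1 : ℕ) : ℤ) * n i + d * (ui - ug) := by
      push_cast
      linarith [hs, hug, hui]
    obtain ⟨v, hv, hdvT⟩ := kfwd s hsT 1 (by omega) (ui - ug) hscast
    have hfig : (fi : ℤ) = (g : ℤ) + d * v := by
      rw [hv]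
      linarith [hug, hui]
    have hfign : fi = g + d * v := by exact_mod_cast hfig
    have hvne : d * v ≠ 0 := by
      intro h
      apply hgfi
      omega
    have hfiT : fi ∈ T := by
      rw [hfign]
      exact hgPF.2 (d * v) hdvT hvne
    exact hfiPF.1 hfiT
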